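/- For a countable tree plan Γ, the structure Γ(ω) is K(Γ)-universal (every A ∈ K(Γ) embeds into Γ(ω)), K(Γ)-homogeneous (every embedding A → Γ(ω) with A ≤ B ∈ K(Γ) extends to an embedding B → Γ(ω)), and K(Γ)-closed (every finite subset of Γ(ω) is contained in a substructure isomorphic to some Γ(n)); hence Γ(ω) is the Fraïssé limit of K(Γ). -/

import Mathlib

/-- A tree plan: a finite set of nodes of `ω^{<ω}` together with a labeling,
`lab σ = true` meaning `λ(σ) = ∞` and `lab σ = false` meaning `λ(σ) = 1`. -/
structure TreePlan where
  nodes : Finset (List ℕ)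
  lab : List ℕ → Bool

/-- The conditions making the data of a `TreePlan` an actual tree plan:
it contains the root, is closed under predecessor, and the root is not an infinity-node. -/
def IsTreePlan (Γ : TreePlan) : Prop :=
  [] ∈ Γ.nodes ∧ (∀ σ ∈ Γ.nodes, σ.dropLast ∈ Γ.nodes) ∧ Γ.lab [] = false

/-- The projection `π` forgetting the second coordinates. -/
def piX {S : Type*} (a : List (ℕ × Option S)) : List ℕ := a.map Prod.fst

/-- The tree `Γ(X)`, for `X` a set in an ambient type `S`.  Entries are pairs `(i, t)`
where `t = none` codes `★` (at nodes with `λ = 1`) and `t = some x` with `x ∈ X`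
at infinity-nodes. -/
def GammaSet (Γ : TreePlan) {S : Type*} (X : Set S) : Set (List (ℕ × Option S)) :=
  {a | piX a ∈ Γ.nodes ∧ ∀ (k : ℕ) (hk : k < a.length),
    (Γ.lab ((piX a).take (k + 1)) = false → (a.get ⟨k, hk⟩).2 = none) ∧
    (Γ.lab ((piX a).take (k + 1)) = true → ∃ x ∈ X, (a.get ⟨k, hk⟩).2 = some x)}

/-- `Γ(ω)`, realized with `X = ℕ`. -/
def GammaOmega (Γ : TreePlan) : Set (List (ℕ × Option ℕ)) :=
  GammaSet Γ (Set.univ : Set ℕ)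

/-- `Γ(n) = Γ([n])` with `[n] = {0, …, n-1} ⊆ ℕ`. -/
def GammaN (Γ : TreePlan) (n : ℕ) : Set (List (ℕ × Option ℕ)) :=
  GammaSet Γ {k : ℕ | k < n}

/-- `↓B`, the downward closure of `B` in `Γ(X)` with respect to the
initial-segment order. -/
def downSet (Γ : TreePlan) {S : Type*} (X : Set S) (B : Set (List (ℕ × Option S))) :
    Set (List (ℕ × Option S)) :=
  {a ∈ GammaSet Γ X | ∃ b ∈ B, a <+: b}

/-- The approximations to the tree closure. -/
def tclAux (Γ : TreePlan) {S : Type*} (X : Set S) (B : Set (List (ℕ × Option S))) :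
    ℕ → Set (List (ℕ × Option S))
  | 0 => insert [] (downSet Γ X B)
  | n + 1 => tclAux Γ X B n ∪
      {a ∈ GammaSet Γ X | Γ.lab (piX a) = false ∧ a.dropLast ∈ tclAux Γ X B n}

/-- The tree closure `tcl(B)` of `B ⊆ Γ(X)`. -/
def tcl (Γ : TreePlan) {S : Type*} (X : Set S) (B : Set (List (ℕ × Option S))) :
    Set (List (ℕ × Option S)) :=
  ⋃ n, tclAux Γ X B n

/-- Longest common prefix of two lists: the meet in the tree of sequences. -/
def lcp {α : Type*} [DecidableEq α] : List α → List α → List α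
  | a :: as, b :: bs => if a = b then a :: lcp as bs else []
  | _, _ => []

/-- Embedding of `L_Γ`-structures between subsets `A`, `B` of trees of sequences:
an injection preserving the order (initial segment), the root, the predecessor,
the meet, and the predicates `P_σ` (i.e. the projection `π`). -/
structure IsGEmb (Γ : TreePlan) {S T : Type*} [DecidableEq S] [DecidableEq T]
    (A : Set (List (ℕ × Option S))) (B : Set (List (ℕ × Option T)))
    (h : List (ℕ × Option S) → List (ℕ × Option T)) : Prop where
  maps : ∀ a ∈ A, h a ∈ B
  inj : ∀ a ∈ A, ∀ b ∈ A, h a = h b → a = b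
  map_root : h [] = []
  map_le : ∀ a ∈ A, ∀ b ∈ A, (a <+: b ↔ h a <+: h b)
  map_pred : ∀ a ∈ A, h a.dropLast = (h a).dropLast
  map_meet : ∀ a ∈ A, ∀ b ∈ A, h (lcp a b) = lcp (h a) (h b)
  map_P : ∀ a ∈ A, piX (h a) = piX a

open Classical in
/-- `I(Γ, σ)`: the number of infinity-nodes `τ ∈ Γ` with `τ ≤ σ`. -/
noncomputable def Icount (Γ : TreePlan) (σ : List ℕ) : ℕ :=
  (Γ.nodes.filter fun τ => Γ.lab τ = true ∧ τ <+: σ).card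

open Classical in
/-- The relative tree plan `Γ_σ = {τ : σ⌢τ ∈ Γ}` with induced labeling. -/
noncomputable def TreePlan.sub (Γ : TreePlan) (σ : List ℕ) : TreePlan where
  nodes := (Γ.nodes.filter fun τ => σ <+: τ).image (List.drop σ.length)
  lab := fun τ => if τ = [] then false else Γ.lab (σ ++ τ)

open Classical in
/-- The successors of the root of `Γ`. -/
noncomputable def rootSuccs (Γ : TreePlan) : Finset ℕ :=
  (Γ.nodes.filter fun σ => σ.length = 1).image fun σ => σ.headI

/-- `deg(Γ) = max {I(Γ,σ) : σ ∈ Γ}`. -/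
noncomputable def degPlan (Γ : TreePlan) : ℕ := Γ.nodes.sup fun σ => Icount Γ σ

open Classical in
/-- `A(Γ)`: the number of nodes of `Γ` of maximal degree. -/
noncomputable def Acoef (Γ : TreePlan) : ℕ :=
  (Γ.nodes.filter fun σ => Icount Γ σ = degPlan Γ).card

section Basics
variable {S : Type*}

lemma piX_length (a : List (ℕ × Option S)) : (piX a).length = a.length :=
  List.length_map _

lemma piX_snoc (a : List (ℕ × Option S)) (e : ℕ × Option S) :
    piX (a ++ [e]) = piX a ++ [e.1] := by simp [piX]

lemma piX_take (a : List (ℕ × Option S)) (k : ℕ) :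
    piX (a.take k) = (piX a).take k := (List.map_take)

lemma nodes_prefix {Γ : TreePlan} (hΓ : IsTreePlan Γ) {τ σ : List ℕ}
    (h : τ <+: σ) (hσ : σ ∈ Γ.nodes) : τ ∈ Γ.nodes := by
  obtain ⟨r, rfl⟩ := h
  induction r using List.reverseRecOn with
  | nil => simpa using hσ
  | append_singleton r e ih =>
    apply ih
    have := hΓ.2.1 _ hσ
    rwa [← List.append_assoc, List.dropLast_concat] at this

lemma gamma_snoc_iff {Γ : TreePlan} (hΓ : IsTreePlan Γ) {X : Set S}
    {l : List (ℕ × Option S)} {e : ℕ × Option S} :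
    l ++ [e] ∈ GammaSet Γ X ↔
      l ∈ GammaSet Γ X ∧ piX l ++ [e.1] ∈ Γ.nodes ∧
      (Γ.lab (piX l ++ [e.1]) = false → e.2 = none) ∧
      (Γ.lab (piX l ++ [e.1]) = true → ∃ x ∈ X, e.2 = some x) := by
  constructor
  · rintro ⟨h1, h2⟩
    rw [piX_snoc] at h1
    have hlast := h2 l.length (by simp)
    rw [piX_snoc] at hlast
    have htake : (piX l ++ [e.1]).take (l.length + 1) = piX l ++ [e.1] := by
      apply List.take_of_length_le; simp [piX_length]
    have hget : (l ++ [e]).get ⟨l.length, by simp⟩ = e := by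
      simp [List.get_eq_getElem, List.getElem_concat_length]
    rw [htake, hget] at hlast
    refine ⟨⟨nodes_prefix hΓ ⟨[e.1], rfl⟩ h1, ?_⟩, h1, hlast.1, hlast.2⟩
    intro k hk
    have hk' : k < (l ++ [e]).length := by simp; omega
    have := h2 k hk'
    have htk : (piX (l ++ [e])).take (k + 1) = (piX l).take (k + 1) := by
      rw [piX_snoc]
      exact List.take_append_of_le_length (by rw [piX_length]; omega)
    have hg : (l ++ [e]).get ⟨k, hk'⟩ = l.get ⟨k, hk⟩ := by
      simp [List.get_eq_getElem, List.getElem_append_left hk]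
    rwa [htk, hg] at this
  · rintro ⟨⟨h1, h2⟩, h3, h4, h5⟩
    refine ⟨by rwa [piX_snoc], ?_⟩
    intro k hk
    rcases Nat.lt_or_ge k l.length with hkl | hkl
    · have := h2 k hkl
      have htk : (piX (l ++ [e])).take (k + 1) = (piX l).take (k + 1) := by
        rw [piX_snoc]
        exact List.take_append_of_le_length (by rw [piX_length]; omega)
      have hg : (l ++ [e]).get ⟨k, hk⟩ = l.get ⟨k, hkl⟩ := by
        simp [List.get_eq_getElem, List.getElem_append_left hkl]
      rw [htk, hg]; exact this
    · have hke : k = l.length := by simp at hk; omega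
      subst hke
      have htake : (piX (l ++ [e])).take (l.length + 1) = piX l ++ [e.1] := by
        rw [piX_snoc]
        apply List.take_of_length_le; simp [piX_length]
      have hget : (l ++ [e]).get ⟨l.length, hk⟩ = e := by
        simp [List.get_eq_getElem, List.getElem_concat_length]
      rw [htake, hget]; exact ⟨h4, h5⟩

lemma gamma_nil {Γ : TreePlan} (hΓ : IsTreePlan Γ) {X : Set S} :
    ([] : List (ℕ × Option S)) ∈ GammaSet Γ X :=
  ⟨hΓ.1, by intro k hk; simp at hk⟩

lemma gamma_prefix {Γ : TreePlan} (hΓ : IsTreePlan Γ) {X : Set S}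
    {a p : List (ℕ × Option S)} (ha : a ∈ GammaSet Γ X) (hp : p <+: a) :
    p ∈ GammaSet Γ X := by
  induction a using List.reverseRecOn with
  | nil => rw [List.prefix_nil] at hp; subst hp; exact ha
  | append_singleton l e ih =>
    rcases List.prefix_concat_iff.mp hp with rfl | hp'
    · exact ha
    · exact ih ((gamma_snoc_iff hΓ).mp ha).1 hp'

lemma gamma_mono {Γ : TreePlan} {X Y : Set S} (hXY : X ⊆ Y) :
    GammaSet Γ X ⊆ GammaSet Γ Y := by
  rintro a ⟨h1, h2⟩
  refine ⟨h1, fun k hk => ⟨(h2 k hk).1, fun ht => ?_⟩⟩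
  obtain ⟨x, hx, hx2⟩ := (h2 k hk).2 ht
  exact ⟨x, hXY hx, hx2⟩

end Basics

section Lcp
variable {α : Type*} [DecidableEq α]

lemma prefix_cons {x : α} {p l : List α} (h : p <+: l) : x :: p <+: x :: l := by
  obtain ⟨t, rfl⟩ := h; exact ⟨t, rfl⟩

lemma lcp_prefix_left : ∀ a b : List α, lcp a b <+: a
  | [], b => by simp [lcp]
  | _ :: _, [] => by simp [lcp]
  | a :: as, b :: bs => by
    by_cases h : a = b
    · subst h
      simp only [lcp, if_pos rfl]
      exact prefix_cons (lcp_prefix_left as bs)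
    · simp [lcp, h]

lemma lcp_prefix_right : ∀ a b : List α, lcp a b <+: b
  | [], b => by simp [lcp]
  | _ :: _, [] => by simp [lcp]
  | a :: as, b :: bs => by
    by_cases h : a = b
    · subst h
      simp only [lcp, if_pos rfl]
      exact prefix_cons (lcp_prefix_right as bs)
    · simp [lcp, h]

lemma prefix_lcp : ∀ p a b : List α, p <+: a → p <+: b → p <+: lcp a b
  | [], _, _, _, _ => List.nil_prefix
  | x :: p, a, b, ha, hb => by
    obtain ⟨ta, rfl⟩ := ha
    obtain ⟨tb, hb'⟩ := hb
    rw [List.cons_append] at hb' ⊢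
    subst hb'
    simp only [lcp, List.cons_append, if_pos rfl]
    exact prefix_cons (prefix_lcp p _ _ ⟨ta, rfl⟩ ⟨tb, rfl⟩)

end Lcp
section Ext

open Classical in
/-- The last value of `f c`. -/
noncomputable def fval (f : List (ℕ × Option ℕ) → List (ℕ × Option ℕ))
    (c : List (ℕ × Option ℕ)) : ℕ :=
  ((f c).getLast?.getD (0, none)).2.getD 0

open Classical in
/-- Bound on the values used by `f` on copies below the preimage of `p` in direction `i`. -/
noncomputable def Mval (Γ : TreePlan) (m : ℕ)
    (incl f : List (ℕ × Option ℕ) → List (ℕ × Option ℕ))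
    (p : List (ℕ × Option ℕ)) (i : ℕ) : ℕ :=
  if h : ∃ c ∈ GammaN Γ m, incl c = p then
    (Finset.range m).sup fun x => fval f (h.choose ++ [(i, some x)])
  else 0

open Classical in
/-- The new last entry assigned by the extension of `f` along `incl` at `b`. -/
noncomputable def entry (Γ : TreePlan) (m : ℕ)
    (incl f : List (ℕ × Option ℕ) → List (ℕ × Option ℕ))
    (b : List (ℕ × Option ℕ)) : ℕ × Option ℕ :=
  if h : ∃ c ∈ GammaN Γ m, incl c = b then (f h.choose).getLast?.getD (0, none)
  else ((b.getLast?.getD (0, none)).1,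
    if Γ.lab (piX b) = true
    then some (Mval Γ m incl f b.dropLast (b.getLast?.getD (0, none)).1 + 1 +
      ((b.getLast?.getD (0, none)).2.getD 0))
    else none)

/-- The extension of `f` along `incl`, defined by recursion on the length. -/
noncomputable def gmap (Γ : TreePlan) (m : ℕ)
    (incl f : List (ℕ × Option ℕ) → List (ℕ × Option ℕ))
    (b : List (ℕ × Option ℕ)) : List (ℕ × Option ℕ) :=
  if h : b = [] then [] else gmap Γ m incl f b.dropLast ++ [entry Γ m incl f b]
termination_by b.length
decreasing_by
  simp only [List.length_dropLast]
  have := List.length_pos_iff.mpr h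
  omega

variable {Γ : TreePlan} {m : ℕ} {incl f : List (ℕ × Option ℕ) → List (ℕ × Option ℕ)}

lemma gmap_nil : gmap Γ m incl f [] = [] := by rw [gmap]; simp

lemma gmap_ne_nil {b : List (ℕ × Option ℕ)} (hb : b ≠ []) :
    gmap Γ m incl f b = gmap Γ m incl f b.dropLast ++ [entry Γ m incl f b] := by
  rw [gmap]; simp [hb]

lemma gmap_snoc (l : List (ℕ × Option ℕ)) (e : ℕ × Option ℕ) :
    gmap Γ m incl f (l ++ [e]) = gmap Γ m incl f l ++ [entry Γ m incl f (l ++ [e])] := by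
  rw [gmap_ne_nil (by simp), List.dropLast_concat]

lemma gmap_length (b : List (ℕ × Option ℕ)) : (gmap Γ m incl f b).length = b.length := by
  induction b using List.reverseRecOn with
  | nil => simp [gmap_nil]
  | append_singleton l e ih => simp [gmap_snoc, ih]

lemma gmap_prefix {p b : List (ℕ × Option ℕ)} (h : p <+: b) :
    gmap Γ m incl f p <+: gmap Γ m incl f b := by
  induction b using List.reverseRecOn with
  | nil => rw [List.prefix_nil] at h; subst h; exact List.prefix_refl _
  | append_singleton l e ih =>
    rcases List.prefix_concat_iff.mp h with rfl | h'
    · exact List.prefix_refl _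
    · exact (ih h').trans (by rw [gmap_snoc]; exact ⟨_, rfl⟩)

lemma IsGEmb.length_eq {Γ : TreePlan} {S T : Type*} [DecidableEq S] [DecidableEq T]
    {A : Set (List (ℕ × Option S))} {B : Set (List (ℕ × Option T))}
    {H : List (ℕ × Option S) → List (ℕ × Option T)}
    (h : IsGEmb Γ A B H) {a : List (ℕ × Option S)} (ha : a ∈ A) :
    (H a).length = a.length := by
  have h1 := congrArg List.length (h.map_P a ha)
  simpa [piX_length] using h1

lemma snoc_getLast {b : List (ℕ × Option ℕ)} (hb : b ≠ []) :
    b.dropLast ++ [b.getLast?.getD (0, none)] = b := by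
  conv_rhs => rw [← List.dropLast_append_getLast hb]
  rw [List.getLast?_eq_getLast hb]
  rfl

end Ext
section Ext2

variable {Γ : TreePlan} {m n : ℕ} {incl f : List (ℕ × Option ℕ) → List (ℕ × Option ℕ)}

lemma gamma_getLast {S : Type*} {Γ : TreePlan} (hΓ : IsTreePlan Γ) {X : Set S}
    {b : List (ℕ × Option S)} (hb : b ∈ GammaSet Γ X) (hne : b ≠ []) :
    (Γ.lab (piX b) = false → (b.getLast?.getD (0, none)).2 = none) ∧
    (Γ.lab (piX b) = true → ∃ x ∈ X, (b.getLast?.getD (0, none)).2 = some x) := by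
  rcases List.eq_nil_or_concat b with rfl | ⟨l, e, hb'⟩
  · exact absurd rfl hne
  · rw [List.concat_eq_append] at hb'
    subst hb'
    have h := (gamma_snoc_iff hΓ).mp hb
    rw [piX_snoc, List.getLast?_concat]
    exact ⟨h.2.2.1, h.2.2.2⟩

lemma gmap_agree (hincl : IsGEmb Γ (GammaN Γ m) (GammaN Γ n) incl)
    (hf : IsGEmb Γ (GammaN Γ m) (GammaOmega Γ) f) (hΓ : IsTreePlan Γ) :
    ∀ c ∈ GammaN Γ m, gmap Γ m incl f (incl c) = f c := by
  intro c hc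
  induction c using List.reverseRecOn with
  | nil => rw [hincl.map_root, gmap_nil, hf.map_root]
  | append_singleton c e ih =>
    have hc' : c ∈ GammaN Γ m := gamma_prefix hΓ hc ⟨[e], rfl⟩
    have hlen : (incl (c ++ [e])).length = c.length + 1 := by
      simpa using hincl.length_eq hc
    have hbne : incl (c ++ [e]) ≠ [] := by
      intro h0; rw [h0] at hlen; simp at hlen
    have hdrop : (incl (c ++ [e])).dropLast = incl c := by
      rw [← hincl.map_pred _ hc, List.dropLast_concat]
    rw [gmap_ne_nil hbne, hdrop, ih hc']
    have hex : ∃ c₀ ∈ GammaN Γ m, incl c₀ = incl (c ++ [e]) := ⟨c ++ [e], hc, rfl⟩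
    rw [entry, dif_pos hex]
    obtain ⟨hch1, hch2⟩ := hex.choose_spec
    have hcc : hex.choose = c ++ [e] := hincl.inj _ hch1 _ hc hch2
    rw [hcc]
    have hflen : (f (c ++ [e])).length = c.length + 1 := by
      simpa using hf.length_eq hc
    have hfne : f (c ++ [e]) ≠ [] := by
      intro h0; rw [h0] at hflen; simp at hflen
    have hfdrop : (f (c ++ [e])).dropLast = f c := by
      rw [← hf.map_pred _ hc, List.dropLast_concat]
    conv_rhs => rw [← snoc_getLast hfne]
    rw [hfdrop]

lemma entry_fst (hincl : IsGEmb Γ (GammaN Γ m) (GammaN Γ n) incl)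
    (hf : IsGEmb Γ (GammaN Γ m) (GammaOmega Γ) f)
    (l : List (ℕ × Option ℕ)) (e : ℕ × Option ℕ) :
    (entry Γ m incl f (l ++ [e])).1 = e.1 := by
  rw [entry]; split
  · rename_i hex
    obtain ⟨hc, hceq⟩ := hex.choose_spec
    have hπ : piX (f hex.choose) = piX (l ++ [e]) := by
      rw [hf.map_P _ hc, ← hincl.map_P _ hc, hceq]
    have h1 : (piX (f hex.choose)).getLast? = some e.1 := by
      rw [hπ, piX_snoc, List.getLast?_concat]
    rw [piX, List.getLast?_map] at h1
    cases hfc : (f hex.choose).getLast? with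
    | none => rw [hfc] at h1; simp at h1
    | some x => rw [hfc] at h1; simp at h1; simpa using h1
  · simp [List.getLast?_concat]

lemma gmap_piX (hincl : IsGEmb Γ (GammaN Γ m) (GammaN Γ n) incl)
    (hf : IsGEmb Γ (GammaN Γ m) (GammaOmega Γ) f)
    (b : List (ℕ × Option ℕ)) : piX (gmap Γ m incl f b) = piX b := by
  induction b using List.reverseRecOn with
  | nil => rw [gmap_nil]
  | append_singleton l e ih =>
    rw [gmap_snoc, piX_snoc, piX_snoc, ih, entry_fst hincl hf]

lemma gmap_maps (hincl : IsGEmb Γ (GammaN Γ m) (GammaN Γ n) incl)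
    (hf : IsGEmb Γ (GammaN Γ m) (GammaOmega Γ) f) (hΓ : IsTreePlan Γ) :
    ∀ b ∈ GammaN Γ n, gmap Γ m incl f b ∈ GammaOmega Γ := by
  intro b hb
  induction b using List.reverseRecOn with
  | nil => rw [gmap_nil]; exact gamma_nil hΓ
  | append_singleton l e ih =>
    have h := (gamma_snoc_iff hΓ).mp hb
    rw [gmap_snoc]
    refine (gamma_snoc_iff hΓ).mpr ⟨ih h.1, ?_, ?_, ?_⟩
    · rw [gmap_piX hincl hf, entry_fst hincl hf]; exact h.2.1
    · rw [gmap_piX hincl hf, entry_fst hincl hf]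
      intro hlab
      rw [entry]; split
      · rename_i hex
        obtain ⟨hch1, hch2⟩ := hex.choose_spec
        have hπ : piX (f hex.choose) = piX l ++ [e.1] := by
          rw [hf.map_P _ hch1, ← hincl.map_P _ hch1, hch2, piX_snoc]
        have hflen : (f hex.choose).length = l.length + 1 := by
          have := congrArg List.length hπ
          simpa [piX_length] using this
        have hfne : f hex.choose ≠ [] := by
          intro h0; rw [h0] at hflen; simp at hflen
        exact (gamma_getLast hΓ (hf.maps _ hch1) hfne).1 (by rwa [hπ])
      · rw [piX_snoc, hlab]; simp
    · rw [gmap_piX hincl hf, entry_fst hincl hf]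
      intro hlab
      rw [entry]; split
      · rename_i hex
        obtain ⟨hch1, hch2⟩ := hex.choose_spec
        have hπ : piX (f hex.choose) = piX l ++ [e.1] := by
          rw [hf.map_P _ hch1, ← hincl.map_P _ hch1, hch2, piX_snoc]
        have hflen : (f hex.choose).length = l.length + 1 := by
          have := congrArg List.length hπ
          simpa [piX_length] using this
        have hfne : f hex.choose ≠ [] := by
          intro h0; rw [h0] at hflen; simp at hflen
        exact (gamma_getLast hΓ (hf.maps _ hch1) hfne).2 (by rwa [hπ])
      · rw [piX_snoc, hlab]; simp

end Ext2
section Ext3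

variable {Γ : TreePlan} {m n : ℕ} {incl f : List (ℕ × Option ℕ) → List (ℕ × Option ℕ)}

lemma entry_not_im {l : List (ℕ × Option ℕ)} {e : ℕ × Option ℕ}
    (h2 : ¬ ∃ c ∈ GammaN Γ m, incl c = l ++ [e]) :
    entry Γ m incl f (l ++ [e]) =
      (e.1, if Γ.lab (piX l ++ [e.1]) = true
            then some (Mval Γ m incl f l e.1 + 1 + e.2.getD 0) else none) := by
  rw [entry, dif_neg h2, List.getLast?_concat, List.dropLast_concat, piX_snoc]
  simp

lemma entry_clash (hincl : IsGEmb Γ (GammaN Γ m) (GammaN Γ n) incl)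
    (hf : IsGEmb Γ (GammaN Γ m) (GammaOmega Γ) f) (hΓ : IsTreePlan Γ)
    {l : List (ℕ × Option ℕ)} {e1 e2 : ℕ × Option ℕ} {x2 : ℕ}
    (hlab : Γ.lab (piX l ++ [e1.1]) = true)
    (hfst : e1.1 = e2.1)
    (hx2e : e2.2 = some x2)
    (h1 : ∃ c ∈ GammaN Γ m, incl c = l ++ [e1])
    (h2 : ¬ ∃ c ∈ GammaN Γ m, incl c = l ++ [e2])
    (hent : entry Γ m incl f (l ++ [e1]) = entry Γ m incl f (l ++ [e2])) : False := by
  have hR : (entry Γ m incl f (l ++ [e2])).2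
      = some (Mval Γ m incl f l e1.1 + 1 + x2) := by
    rw [entry_not_im h2, ← hfst, hx2e]
    simp [hlab]
  rw [entry, dif_pos h1] at hent
  obtain ⟨hch1, hch2⟩ := h1.choose_spec
  set c := h1.choose with hcdef
  have hclen : c.length = l.length + 1 := by
    have := hincl.length_eq hch1
    rw [hch2] at this; simpa using this.symm
  have hcne : c ≠ [] := by intro h0; rw [h0] at hclen; simp at hclen
  obtain ⟨c', ec, hc'⟩ : ∃ c' ec, c = c' ++ [ec] := by
    rcases List.eq_nil_or_concat c with h0 | ⟨c', ec, h0⟩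
    · exact absurd h0 hcne
    · exact ⟨c', ec, by rw [h0, List.concat_eq_append]⟩
  have hc'm : c' ∈ GammaN Γ m := gamma_prefix hΓ (hc' ▸ hch1) ⟨[ec], rfl⟩
  have hinclc' : incl c' = l := by
    have h3 := hincl.map_pred c hch1
    rw [hch2, List.dropLast_concat] at h3
    rw [← h3, hc', List.dropLast_concat]
  have hπc : piX c = piX l ++ [e1.1] := by
    rw [← hincl.map_P c hch1, hch2, piX_snoc]
  have hec1 : ec.1 = e1.1 := by
    have h3 := hπc
    rw [hc', piX_snoc] at h3
    have h4 := congrArg List.getLast? h3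
    rw [List.getLast?_concat, List.getLast?_concat] at h4
    simpa using h4
  have hlabc : Γ.lab (piX c) = true := by rw [hπc]; exact hlab
  obtain ⟨x'', hx''m, hx''⟩ := (gamma_getLast hΓ hch1 hcne).2 hlabc
  have hec2 : ec.2 = some x'' := by
    rw [hc', List.getLast?_concat] at hx''; simpa using hx''
  have hflen : (f c).length = l.length + 1 := by
    rw [hf.length_eq hch1]; exact hclen
  have hfne : f c ≠ [] := by intro h0; rw [h0] at hflen; simp at hflen
  obtain ⟨y, -, hy⟩ := (gamma_getLast hΓ (hf.maps c hch1) hfne).2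
    (by rw [hf.map_P c hch1]; exact hlabc)
  have hex' : ∃ c₀ ∈ GammaN Γ m, incl c₀ = l := ⟨c', hc'm, hinclc'⟩
  have hch' : hex'.choose = c' :=
    hincl.inj _ hex'.choose_spec.1 _ hc'm (hex'.choose_spec.2.trans hinclc'.symm)
  have hcec : c' ++ [(e1.1, some x'')] = c := by
    rw [hc']
    obtain ⟨i0, t0⟩ := ec
    simp only at hec1 hec2
    rw [hec1, hec2]
  have hyM : y ≤ Mval Γ m incl f l e1.1 := by
    rw [Mval, dif_pos hex', hch']
    have h5 : fval f (c' ++ [(e1.1, some x'')]) = y := by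
      rw [hcec, fval, hy]
      rfl
    rw [← h5]
    have hxm : x'' < m := hx''m
    exact Finset.le_sup (f := fun x => fval f (c' ++ [(e1.1, some x)]))
      (Finset.mem_range.mpr hxm)
  have h6 := congrArg Prod.snd hent
  rw [hR] at h6
  rw [hy] at h6
  have : y = Mval Γ m incl f l e1.1 + 1 + x2 := by simpa using h6
  omega

lemma gmap_inj (hincl : IsGEmb Γ (GammaN Γ m) (GammaN Γ n) incl)
    (hf : IsGEmb Γ (GammaN Γ m) (GammaOmega Γ) f) (hΓ : IsTreePlan Γ) :
    ∀ a ∈ GammaN Γ n, ∀ b ∈ GammaN Γ n,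
      gmap Γ m incl f a = gmap Γ m incl f b → a = b := by
  intro a
  induction a using List.reverseRecOn with
  | nil =>
    intro _ b _ heq
    rw [gmap_nil] at heq
    have h1 := gmap_length (Γ := Γ) (m := m) (incl := incl) (f := f) b
    rw [← heq] at h1
    exact (List.length_eq_zero_iff.mp h1.symm).symm
  | append_singleton l e1 ih =>
    intro ha b hb heq
    have heq0 := heq
    have hlen : b.length = l.length + 1 := by
      have h1 := gmap_length (Γ := Γ) (m := m) (incl := incl) (f := f) (l ++ [e1])
      have h2 := gmap_length (Γ := Γ) (m := m) (incl := incl) (f := f) b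
      rw [heq] at h1
      rw [h2] at h1
      simpa using h1
    obtain ⟨l2, e2, rfl⟩ : ∃ l2 e2, b = l2 ++ [e2] := by
      rcases List.eq_nil_or_concat b with rfl | ⟨l2, e2, hb2⟩
      · simp at hlen
      · exact ⟨l2, e2, by rw [hb2, List.concat_eq_append]⟩
    rw [gmap_snoc, gmap_snoc] at heq
    obtain ⟨heq1, heq2⟩ := List.append_inj' heq rfl
    have hl2 : l = l2 :=
      ih (gamma_prefix hΓ ha ⟨[e1], rfl⟩) l2 (gamma_prefix hΓ hb ⟨[e2], rfl⟩) heq1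
    subst hl2
    have hent : entry Γ m incl f (l ++ [e1]) = entry Γ m incl f (l ++ [e2]) := by
      simpa using heq2
    have hfst : e1.1 = e2.1 := by
      rw [← entry_fst hincl hf l e1, ← entry_fst hincl hf l e2, hent]
    suffices he : e1 = e2 by rw [he]
    have hsnoc1 := (gamma_snoc_iff hΓ).mp ha
    have hsnoc2 := (gamma_snoc_iff hΓ).mp hb
    cases hlab : Γ.lab (piX l ++ [e1.1]) with
    | false =>
      have n1 := hsnoc1.2.2.1 hlab
      have n2 := hsnoc2.2.2.1 (by rwa [← hfst])
      obtain ⟨i1, t1⟩ := e1; obtain ⟨i2, t2⟩ := e2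
      simp only at hfst n1 n2
      rw [hfst, n1, n2]
    | true =>
      obtain ⟨x1, hx1, hx1e⟩ := hsnoc1.2.2.2 hlab
      obtain ⟨x2, hx2, hx2e⟩ := hsnoc2.2.2.2 (by rwa [← hfst])
      by_cases h1 : ∃ c ∈ GammaN Γ m, incl c = l ++ [e1]
        <;> by_cases h2 : ∃ c ∈ GammaN Γ m, incl c = l ++ [e2]
      · -- both in the image
        obtain ⟨c1, hc1m, hc1⟩ := h1
        obtain ⟨c2, hc2m, hc2⟩ := h2
        rw [← hc1, ← hc2, gmap_agree hincl hf hΓ c1 hc1m,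
          gmap_agree hincl hf hΓ c2 hc2m] at heq0
        have : c1 = c2 := hf.inj _ hc1m _ hc2m heq0
        have h7 : l ++ [e1] = l ++ [e2] := by rw [← hc1, ← hc2, this]
        simpa using h7
      · exact absurd (entry_clash hincl hf hΓ hlab hfst hx2e h1 h2 hent) id
      · exact absurd (entry_clash hincl hf hΓ (hfst ▸ hlab) hfst.symm hx1e h2 h1
          hent.symm) id
      · rw [entry_not_im h1, entry_not_im h2] at hent
        have h8 := congrArg Prod.snd hent
        simp only at h8
        rw [hx1e, hx2e, ← hfst] at h8
        simp only [hlab, if_true, Option.getD_some, Option.some.injEq] at h8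
        have hx12 : x1 = x2 := by omega
        obtain ⟨i1, t1⟩ := e1; obtain ⟨i2, t2⟩ := e2
        simp only at hfst hx1e hx2e
        rw [hfst, hx1e, hx2e, hx12]

end Ext3
section Ext4

variable {Γ : TreePlan} {m n : ℕ} {incl f : List (ℕ × Option ℕ) → List (ℕ × Option ℕ)}

lemma prefix_eq_of_length {α : Type*} {p1 p2 l : List α}
    (h1 : p1 <+: l) (h2 : p2 <+: l) (h : p1.length = p2.length) : p1 = p2 := by
  rw [List.prefix_iff_eq_take.mp h1, List.prefix_iff_eq_take.mp h2, h]

lemma gmap_pred (b : List (ℕ × Option ℕ)) :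
    gmap Γ m incl f b.dropLast = (gmap Γ m incl f b).dropLast := by
  rcases eq_or_ne b [] with rfl | hb
  · simp [gmap_nil]
  · rw [gmap_ne_nil hb, List.dropLast_concat]

lemma gmap_take (b : List (ℕ × Option ℕ)) (k : ℕ) :
    gmap Γ m incl f (b.take k) = (gmap Γ m incl f b).take k := by
  apply prefix_eq_of_length (gmap_prefix (List.take_prefix k b))
    (List.take_prefix k (gmap Γ m incl f b))
  rw [gmap_length, List.length_take, List.length_take, gmap_length]

lemma gmap_le_rev (hincl : IsGEmb Γ (GammaN Γ m) (GammaN Γ n) incl)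
    (hf : IsGEmb Γ (GammaN Γ m) (GammaOmega Γ) f) (hΓ : IsTreePlan Γ)
    {a b : List (ℕ × Option ℕ)} (ha : a ∈ GammaN Γ n) (hb : b ∈ GammaN Γ n)
    (h : gmap Γ m incl f a <+: gmap Γ m incl f b) : a <+: b := by
  have h1 : gmap Γ m incl f a = (gmap Γ m incl f b).take a.length := by
    rw [← gmap_length (Γ := Γ) (m := m) (incl := incl) (f := f) a]
    exact List.prefix_iff_eq_take.mp h
  rw [← gmap_take] at h1
  have h2 : a = b.take a.length :=
    gmap_inj hincl hf hΓ a ha (b.take a.length)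
      (gamma_prefix hΓ hb (List.take_prefix _ _)) h1
  exact h2 ▸ List.take_prefix _ _

lemma gmap_meet (hincl : IsGEmb Γ (GammaN Γ m) (GammaN Γ n) incl)
    (hf : IsGEmb Γ (GammaN Γ m) (GammaOmega Γ) f) (hΓ : IsTreePlan Γ)
    {a b : List (ℕ × Option ℕ)} (ha : a ∈ GammaN Γ n) (hb : b ∈ GammaN Γ n) :
    gmap Γ m incl f (lcp a b) = lcp (gmap Γ m incl f a) (gmap Γ m incl f b) := by
  have hpa : lcp a b <+: a := lcp_prefix_left a b
  have hpb : lcp a b <+: b := lcp_prefix_right a b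
  have h1 : gmap Γ m incl f (lcp a b) <+: lcp (gmap Γ m incl f a) (gmap Γ m incl f b) :=
    prefix_lcp _ _ _ (gmap_prefix hpa) (gmap_prefix hpb)
  have hqa : lcp (gmap Γ m incl f a) (gmap Γ m incl f b) <+: gmap Γ m incl f a :=
    lcp_prefix_left _ _
  have hqb : lcp (gmap Γ m incl f a) (gmap Γ m incl f b) <+: gmap Γ m incl f b :=
    lcp_prefix_right _ _
  have hlen : (lcp (gmap Γ m incl f a) (gmap Γ m incl f b)).length ≤ (lcp a b).length := by
    by_contra hlt
    push_neg at hlt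
    set k := (lcp a b).length + 1 with hk
    have hk1 : k ≤ (lcp (gmap Γ m incl f a) (gmap Γ m incl f b)).length := hlt
    have e1 : (lcp (gmap Γ m incl f a) (gmap Γ m incl f b)).take k
        = (gmap Γ m incl f a).take k := by
      rw [List.prefix_iff_eq_take.mp hqa, List.take_take, min_eq_left hk1]
    have e2 : (lcp (gmap Γ m incl f a) (gmap Γ m incl f b)).take k
        = (gmap Γ m incl f b).take k := by
      rw [List.prefix_iff_eq_take.mp hqb, List.take_take, min_eq_left hk1]
    have e3 : gmap Γ m incl f (a.take k) = gmap Γ m incl f (b.take k) := by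
      rw [gmap_take, gmap_take, ← e1, ← e2]
    have e4 : a.take k = b.take k :=
      gmap_inj hincl hf hΓ _ (gamma_prefix hΓ ha (List.take_prefix _ _)) _
        (gamma_prefix hΓ hb (List.take_prefix _ _)) e3
    have e5 : a.take k <+: lcp a b :=
      prefix_lcp _ _ _ (List.take_prefix _ _) (e4 ▸ List.take_prefix _ _)
    have e6 : k ≤ a.length := by
      have := hqa.length_le
      rw [gmap_length] at this
      omega
    have := e5.length_le
    rw [List.length_take, min_eq_left e6] at this
    omega
  have h2 : lcp (gmap Γ m incl f a) (gmap Γ m incl f b) <+: gmap Γ m incl f (lcp a b) :=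
    List.prefix_of_prefix_length_le hqa (gmap_prefix hpa)
      (by rw [gmap_length]; exact hlen)
  exact prefix_eq_of_length h1 (List.prefix_refl _)
    (le_antisymm h1.length_le h2.length_le)

lemma idEmb (hΓ : IsTreePlan Γ) {X Y : Set ℕ} (hXY : X ⊆ Y) :
    IsGEmb Γ (GammaSet Γ X) (GammaSet Γ Y) id where
  maps := fun a ha => gamma_mono hXY ha
  inj := fun a _ b _ h => h
  map_root := rfl
  map_le := fun _ _ _ _ => Iff.rfl
  map_pred := fun _ _ => rfl
  map_meet := fun _ _ _ _ => rfl
  map_P := fun _ _ => rfl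

end Ext4
/-- `Γ(ω)` is the Fraïssé limit of `K(Γ)`: it is `K(Γ)`-universal (every `Γ(n)`
embeds into `Γ(ω)`), `K(Γ)`-homogeneous (every embedding `Γ(m) → Γ(ω)` extends
along any embedding `Γ(m) → Γ(n)`), and `K(Γ)`-closed (every finite subset of
`Γ(ω)` is contained in an embedded copy of some `Γ(n)`). -/
theorem gammaOmega_is_generic (Γ : TreePlan) (hΓ : IsTreePlan Γ) :
    (∀ n : ℕ, 1 ≤ n → ∃ h : List (ℕ × Option ℕ) → List (ℕ × Option ℕ),
      IsGEmb Γ (GammaN Γ n) (GammaOmega Γ) h) ∧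
    (∀ m n : ℕ, 1 ≤ m → m ≤ n →
      ∀ incl f : List (ℕ × Option ℕ) → List (ℕ × Option ℕ),
        IsGEmb Γ (GammaN Γ m) (GammaN Γ n) incl →
        IsGEmb Γ (GammaN Γ m) (GammaOmega Γ) f →
        ∃ g : List (ℕ × Option ℕ) → List (ℕ × Option ℕ),
          IsGEmb Γ (GammaN Γ n) (GammaOmega Γ) g ∧
          ∀ a ∈ GammaN Γ m, g (incl a) = f a) ∧
    (∀ F : Finset (List (ℕ × Option ℕ)), ↑F ⊆ GammaOmega Γ →
      ∃ (n : ℕ) (h : List (ℕ × Option ℕ) → List (ℕ × Option ℕ)),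
        1 ≤ n ∧ IsGEmb Γ (GammaN Γ n) (GammaOmega Γ) h ∧
        ↑F ⊆ h '' GammaN Γ n) := by
  refine ⟨?_, ?_, ?_⟩
  · intro n _
    exact ⟨id, idEmb hΓ (Set.subset_univ _)⟩
  · intro m n _ _ incl f hincl hf
    refine ⟨gmap Γ m incl f, ?_, fun a ha => gmap_agree hincl hf hΓ a ha⟩
    exact {
      maps := fun b hb => gmap_maps hincl hf hΓ b hb
      inj := gmap_inj hincl hf hΓ
      map_root := gmap_nil
      map_le := fun a ha b hb =>
        ⟨fun h => gmap_prefix h, fun h => gmap_le_rev hincl hf hΓ ha hb h⟩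
      map_pred := fun b _ => gmap_pred b
      map_meet := fun a ha b hb => gmap_meet hincl hf hΓ ha hb
      map_P := fun b _ => gmap_piX hincl hf b }
  · intro F hF
    refine ⟨F.sup (fun a => (a.map fun e => e.2.getD 0).sum) + 1, id,
      Nat.le_add_left 1 _, idEmb hΓ (Set.subset_univ _), ?_⟩
    rw [Set.image_id]
    intro a ha
    have haΩ := hF ha
    refine ⟨haΩ.1, fun k hk => ⟨(haΩ.2 k hk).1, fun ht => ?_⟩⟩
    obtain ⟨x, -, hx⟩ := (haΩ.2 k hk).2 ht
    refine ⟨x, ?_, hx⟩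
    have hmem : (a.get ⟨k, hk⟩).2.getD 0 ∈ a.map (fun e => e.2.getD 0) :=
      List.mem_map_of_mem (a.get_mem ⟨k, hk⟩)
    have hle : (a.get ⟨k, hk⟩).2.getD 0 ≤ (a.map fun e => e.2.getD 0).sum :=
      List.single_le_sum (fun _ _ => Nat.zero_le _) _ hmem
    rw [hx] at hle
    simp only [Option.getD_some] at hle
    have hle2 := Finset.le_sup (f := fun a => (a.map fun e => e.2.getD 0).sum)
      (Finset.mem_coe.mp ha)
    exact Nat.lt_succ_of_le (hle.trans hle2)
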